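/- arXiv:math/0410228 — 3 statements merged into one kernel-verified Lean document; each statement's English description precedes it below -/
import Mathlib

section
/- Let $\{a_j\}_{j=0}^\infty$ and $\{b_k\}_{k=0}^\infty$ be submultiplicative sequences of nonnegative real numbers with $a_0 = b_0 = 1$, and define $c_n = \sum_{j=0}^n \binom{n}{j} a_j b_{n-j}$ for each nonnegative integer $n$. Then $\{c_n\}_{n=0}^\infty$ is submultiplicative: for all nonnegative integers $m, n$, $c_{m+n} \le c_m \cdot c_n$. -/
theorem binomial_convolution_submultiplicative
    (a b : ℕ → ℝ) (hann : ∀ j, 0 ≤ a j) (hbnn : ∀ k, 0 ≤ b k)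
    (ha0 : a 0 = 1) (hb0 : b 0 = 1)
    (hasub : ∀ j l : ℕ, a (j + l) ≤ a j * a l)
    (hbsub : ∀ j l : ℕ, b (j + l) ≤ b j * b l)
    (c : ℕ → ℝ)
    (hc : ∀ n : ℕ, c n = ∑ j ∈ Finset.range (n + 1), (n.choose j : ℝ) * a j * b (n - j)) :
    ∀ m n : ℕ, c (m + n) ≤ c m * c n := by
  intro m n
  rw [hc, hc, hc, Finset.sum_mul_sum]
  -- RHS as a sum over the grid
  have hgrid : (∑ i ∈ Finset.range (m+1), ∑ k ∈ Finset.range (n+1),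
      ((m.choose i : ℝ) * a i * b (m - i)) * ((n.choose k : ℝ) * a k * b (n - k)))
      = ∑ p ∈ (Finset.range (m+1) ×ˢ Finset.range (n+1)),
        ((m.choose p.1 : ℝ) * a p.1 * b (m - p.1)) * ((n.choose p.2 : ℝ) * a p.2 * b (n - p.2)) := by
    rw [Finset.sum_product]
  rw [hgrid]
  set f : ℕ × ℕ → ℝ := fun p =>
    ((m.choose p.1 : ℝ) * a p.1 * b (m - p.1)) * ((n.choose p.2 : ℝ) * a p.2 * b (n - p.2)) with hf
  have hmaps : ∀ p ∈ Finset.range (m+1) ×ˢ Finset.range (n+1),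
      p.1 + p.2 ∈ Finset.range (m + n + 1) := by
    intro p hp
    simp only [Finset.mem_product, Finset.mem_range] at hp ⊢
    omega
  rw [← Finset.sum_fiberwise_of_maps_to hmaps f]
  apply Finset.sum_le_sum
  intro j hj
  simp only [Finset.mem_range] at hj
  -- Vandermonde
  have hvdm : ((m + n).choose j : ℝ)
      = ∑ p ∈ ((Finset.range (m+1) ×ˢ Finset.range (n+1)).filter (fun p => p.1 + p.2 = j)),
        (m.choose p.1 : ℝ) * (n.choose p.2 : ℝ) := by
    rw [Nat.add_choose_eq]
    push_cast
    symm
    apply Finset.sum_subset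
    · intro p hp
      simp only [Finset.mem_filter, Finset.mem_product, Finset.mem_range,
        Finset.HasAntidiagonal.mem_antidiagonal] at hp ⊢
      omega
    · intro p hp hnp
      simp only [Finset.mem_filter, Finset.mem_product, Finset.mem_range,
        Finset.HasAntidiagonal.mem_antidiagonal] at hp hnp
      have : m < p.1 ∨ n < p.2 := by omega
      rcases this with h | h
      · rw [Nat.choose_eq_zero_of_lt h]; simp
      · rw [Nat.choose_eq_zero_of_lt h]; simp
  rw [hvdm, Finset.sum_mul, Finset.sum_mul]
  apply Finset.sum_le_sum
  intro p hp
  simp only [Finset.mem_filter, Finset.mem_product, Finset.mem_range] at hp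
  obtain ⟨⟨hp1, hp2⟩, hpj⟩ := hp
  have h1 : p.1 ≤ m := by omega
  have h2 : p.2 ≤ n := by omega
  have ha' : a j ≤ a p.1 * a p.2 := by rw [← hpj]; exact hasub p.1 p.2
  have hb' : b (m + n - j) ≤ b (m - p.1) * b (n - p.2) := by
    have : m + n - j = (m - p.1) + (n - p.2) := by omega
    rw [this]; exact hbsub _ _
  have hcnn : (0:ℝ) ≤ (m.choose p.1 : ℝ) * (n.choose p.2 : ℝ) := by positivity
  calc (m.choose p.1 : ℝ) * (n.choose p.2 : ℝ) * a j * b (m + n - j)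
      ≤ (m.choose p.1 : ℝ) * (n.choose p.2 : ℝ) * (a p.1 * a p.2) * (b (m - p.1) * b (n - p.2)) := by
        apply mul_le_mul
        · exact mul_le_mul_of_nonneg_left ha' hcnn
        · exact hb'
        · exact hbnn _
        · exact mul_nonneg hcnn (mul_nonneg (hann _) (hann _))
    _ = f p := by rw [hf]; ring
end

section
/- Let $\{a_j\}_{j=1}^\infty$ and $\{b_k\}_{k=1}^\infty$ be submultiplicative sequences of nonnegative real numbers, extended by $a_0 = b_0 = 1$, and define $c_n = \sum_{j=0}^n \binom{n}{j} a_j b_{n-j}$. Then $\lim_{n \to \infty} (c_n)^{1/n} \le \lim_{j \to \infty} (a_j)^{1/j} + \lim_{k \to \infty} (b_k)^{1/k}$ (all three limits exist since the corresponding sequences are submultiplicative). -/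
open Filter Finset

private lemma ev_lt_aux {C s u : ℝ} (hC : 1 ≤ C) (hsu : s < u) :
    ∀ᶠ n : ℕ in atTop, C ^ ((1 : ℝ) / n) * s < u := by
  have hC0 : (0 : ℝ) < C := lt_of_lt_of_le one_pos hC
  have h1 : Tendsto (fun n : ℕ => C ^ ((1 : ℝ) / n)) atTop (nhds (C ^ (0 : ℝ))) :=
    Filter.Tendsto.rpow tendsto_const_nhds tendsto_one_div_atTop_nhds_zero_nat
      (Or.inl (ne_of_gt hC0))
  have h2 : Tendsto (fun n : ℕ => C ^ ((1 : ℝ) / n) * s) atTop (nhds s) := by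
    have := h1.mul_const s
    rwa [Real.rpow_zero, one_mul] at this
  exact h2.eventually_lt_const hsu

private lemma bound_aux (a : ℕ → ℝ) (h0 : a 0 = 1) (hnn : ∀ j, 0 ≤ a j)
    (hsub : ∀ j l, a (j + l) ≤ a j * a l) {α : ℝ} (hα : 0 < α) {k : ℕ} (hk : 1 ≤ k)
    (hak : a k ≤ α ^ k) : ∃ C : ℝ, 1 ≤ C ∧ ∀ j, a j ≤ C * α ^ j := by
  set C : ℝ := ∑ r ∈ range k, a r / α ^ r with hCdef
  have hterm : ∀ r ∈ range k, (0 : ℝ) ≤ a r / α ^ r := fun r _ =>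
    div_nonneg (hnn r) (pow_nonneg hα.le r)
  have hC1 : 1 ≤ C := by
    have h00 : (0 : ℕ) ∈ range k := mem_range.2 (by omega)
    have := Finset.single_le_sum hterm h00
    simpa [h0] using this
  refine ⟨C, hC1, ?_⟩
  intro j
  induction j using Nat.strong_induction_on with
  | _ j ih =>
    by_cases hj : j < k
    · have h1 : a j / α ^ j ≤ C := Finset.single_le_sum hterm (mem_range.2 hj)
      have hαj : (0 : ℝ) < α ^ j := pow_pos hα j
      calc a j = a j / α ^ j * α ^ j := by field_simp
        _ ≤ C * α ^ j := mul_le_mul_of_nonneg_right h1 hαj.le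
    · push_neg at hj
      have hjk : j - k < j := by omega
      have hsplit : k + (j - k) = j := by omega
      have h1 : a j ≤ a k * a (j - k) := by
        have := hsub k (j - k); rwa [hsplit] at this
      have h2 : a (j - k) ≤ C * α ^ (j - k) := ih _ hjk
      calc a j ≤ a k * a (j - k) := h1
        _ ≤ α ^ k * (C * α ^ (j - k)) :=
          mul_le_mul hak h2 (hnn _) (pow_nonneg hα.le k)
        _ = C * (α ^ k * α ^ (j - k)) := by ring
        _ = C * α ^ j := by rw [← pow_add, hsplit]

private lemma tendsto_root_aux (a : ℕ → ℝ) (h0 : a 0 = 1) (hnn : ∀ j, 0 ≤ a j)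
    (hsub : ∀ j l, a (j + l) ≤ a j * a l) :
    ∃ L : ℝ, 0 ≤ L ∧ (∀ j, L ^ j ≤ a j) ∧
      Tendsto (fun n : ℕ => a n ^ ((1 : ℝ) / n)) atTop (nhds L) := by
  set g : ℕ → ℝ := fun m => a (m + 1) ^ ((1 : ℝ) / ((m + 1 : ℕ) : ℝ)) with hgdef
  have hg0 : ∀ m, 0 ≤ g m := fun m => Real.rpow_nonneg (hnn _) _
  have hbdd : BddBelow (Set.range g) := ⟨0, by rintro x ⟨m, rfl⟩; exact hg0 m⟩
  set L : ℝ := ⨅ m, g m with hLdef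
  have hL0 : 0 ≤ L := le_ciInf hg0
  have hLle : ∀ m, L ≤ g m := fun m => ciInf_le hbdd m
  have hpowinv : ∀ (x : ℝ), 0 ≤ x → ∀ n : ℕ, 1 ≤ n → (x ^ ((1 : ℝ) / n)) ^ n = x := by
    intro x hx n hn
    rw [one_div]
    exact Real.rpow_inv_natCast_pow hx (by omega)
  have hinvpow : ∀ (x : ℝ), 0 ≤ x → ∀ n : ℕ, 1 ≤ n → (x ^ n) ^ ((1 : ℝ) / n) = x := by
    intro x hx n hn
    rw [one_div]
    exact Real.pow_rpow_inv_natCast hx (by omega)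
  have hLpow : ∀ j, L ^ j ≤ a j := by
    intro j
    rcases Nat.eq_zero_or_pos j with rfl | hj
    · simp [h0]
    · have h1 : L ≤ a j ^ ((1 : ℝ) / j) := by
        have h := hLle (j - 1)
        simp only [hgdef] at h
        rwa [Nat.sub_add_cancel hj] at h
      calc L ^ j ≤ (a j ^ ((1 : ℝ) / j)) ^ j := pow_le_pow_left₀ hL0 h1 j
        _ = a j := hpowinv _ (hnn j) j hj
  refine ⟨L, hL0, hLpow, tendsto_order.2 ⟨?_, ?_⟩⟩
  · intro l hl
    filter_upwards [eventually_ge_atTop 1] with n hn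
    refine lt_of_lt_of_le hl ?_
    obtain ⟨m, rfl⟩ : ∃ m, n = m + 1 := ⟨n - 1, by omega⟩
    simpa only [hgdef] using hLle m
  · intro u hu
    set mid : ℝ := (L + u) / 2 with hmiddef
    have hmidL : L < mid := by simp only [hmiddef]; linarith
    have hmidu : mid < u := by simp only [hmiddef]; linarith
    have hmid0 : 0 < mid := lt_of_le_of_lt hL0 hmidL
    obtain ⟨m, hm⟩ := exists_lt_of_ciInf_lt (by rw [← hLdef]; exact hmidL)
    simp only [hgdef] at hm
    set k : ℕ := m + 1 with hkdef
    have hk1 : 1 ≤ k := by omega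
    have hak : a k ≤ mid ^ k := by
      calc a k = (a k ^ ((1 : ℝ) / k)) ^ k := (hpowinv _ (hnn k) k hk1).symm
        _ ≤ mid ^ k := pow_le_pow_left₀ (Real.rpow_nonneg (hnn k) _) hm.le k
    obtain ⟨C, hC1, hCb⟩ := bound_aux a h0 hnn hsub hmid0 hk1 hak
    filter_upwards [ev_lt_aux hC1 hmidu, eventually_ge_atTop 1] with n h1 hn
    have hx : a n ^ ((1 : ℝ) / n) ≤ C ^ ((1 : ℝ) / n) * mid := by
      calc a n ^ ((1 : ℝ) / n) ≤ (C * mid ^ n) ^ ((1 : ℝ) / n) :=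
            Real.rpow_le_rpow (hnn n) (hCb n) (by positivity)
        _ = C ^ ((1 : ℝ) / n) * (mid ^ n) ^ ((1 : ℝ) / n) :=
            Real.mul_rpow (le_trans zero_le_one hC1) (pow_nonneg hmid0.le n)
        _ = C ^ ((1 : ℝ) / n) * mid := by rw [hinvpow _ hmid0.le n hn]
    exact lt_of_le_of_lt hx h1

theorem binomial_convolution_limit_bound
    (a b : ℕ → ℝ)
    (hann : ∀ j, 1 ≤ j → 0 ≤ a j) (hbnn : ∀ k, 1 ≤ k → 0 ≤ b k)
    (hasub : ∀ j l : ℕ, 1 ≤ j → 1 ≤ l → a (j + l) ≤ a j * a l)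
    (hbsub : ∀ j l : ℕ, 1 ≤ j → 1 ≤ l → b (j + l) ≤ b j * b l)
    (ha0 : a 0 = 1) (hb0 : b 0 = 1)
    (c : ℕ → ℝ)
    (hc : ∀ n : ℕ, c n = ∑ j ∈ Finset.range (n + 1), (n.choose j : ℝ) * a j * b (n - j)) :
    ∃ La Lb Lc : ℝ,
      Tendsto (fun j : ℕ => (a j) ^ ((1 : ℝ) / j)) atTop (nhds La) ∧
      Tendsto (fun k : ℕ => (b k) ^ ((1 : ℝ) / k)) atTop (nhds Lb) ∧
      Tendsto (fun n : ℕ => (c n) ^ ((1 : ℝ) / n)) atTop (nhds Lc) ∧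
      Lc ≤ La + Lb := by
  -- extend nonnegativity and submultiplicativity to index 0
  have hann' : ∀ j, 0 ≤ a j := by
    intro j; rcases Nat.eq_zero_or_pos j with rfl | hj
    · rw [ha0]; exact zero_le_one
    · exact hann j hj
  have hbnn' : ∀ j, 0 ≤ b j := by
    intro j; rcases Nat.eq_zero_or_pos j with rfl | hj
    · rw [hb0]; exact zero_le_one
    · exact hbnn j hj
  have hasub' : ∀ j l, a (j + l) ≤ a j * a l := by
    intro j l
    rcases Nat.eq_zero_or_pos j with rfl | hj
    · simp [ha0]
    rcases Nat.eq_zero_or_pos l with rfl | hl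
    · simp [ha0]
    · exact hasub j l hj hl
  have hbsub' : ∀ j l, b (j + l) ≤ b j * b l := by
    intro j l
    rcases Nat.eq_zero_or_pos j with rfl | hj
    · simp [hb0]
    rcases Nat.eq_zero_or_pos l with rfl | hl
    · simp [hb0]
    · exact hbsub j l hj hl
  obtain ⟨La, hLa0, hLaPow, hLaT⟩ := tendsto_root_aux a ha0 hann' hasub'
  obtain ⟨Lb, hLb0, hLbPow, hLbT⟩ := tendsto_root_aux b hb0 hbnn' hbsub'
  have hpowinv : ∀ (x : ℝ), 0 ≤ x → ∀ n : ℕ, 1 ≤ n → (x ^ ((1 : ℝ) / n)) ^ n = x := by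
    intro x hx n hn
    rw [one_div]
    exact Real.rpow_inv_natCast_pow hx (by omega)
  have hinvpow : ∀ (x : ℝ), 0 ≤ x → ∀ n : ℕ, 1 ≤ n → (x ^ n) ^ ((1 : ℝ) / n) = x := by
    intro x hx n hn
    rw [one_div]
    exact Real.pow_rpow_inv_natCast hx (by omega)
  refine ⟨La, Lb, La + Lb, hLaT, hLbT, ?_, le_refl _⟩
  -- lower bound on c
  have hclow : ∀ n, (La + Lb) ^ n ≤ c n := by
    intro n
    rw [hc n, add_pow]
    refine Finset.sum_le_sum ?_
    intro j _
    have h1 : La ^ j * Lb ^ (n - j) ≤ a j * b (n - j) :=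
      mul_le_mul (hLaPow j) (hLbPow (n - j)) (pow_nonneg hLb0 _) (hann' j)
    calc La ^ j * Lb ^ (n - j) * (n.choose j : ℝ)
        = (n.choose j : ℝ) * (La ^ j * Lb ^ (n - j)) := by ring
      _ ≤ (n.choose j : ℝ) * (a j * b (n - j)) :=
          mul_le_mul_of_nonneg_left h1 (Nat.cast_nonneg _)
      _ = (n.choose j : ℝ) * a j * b (n - j) := by ring
  have hcnn : ∀ n, 0 ≤ c n := fun n =>
    le_trans (pow_nonneg (add_nonneg hLa0 hLb0) n) (hclow n)
  refine tendsto_order.2 ⟨?_, ?_⟩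
  · intro l hl
    filter_upwards [eventually_ge_atTop 1] with n hn
    refine lt_of_lt_of_le hl ?_
    calc La + Lb = ((La + Lb) ^ n) ^ ((1 : ℝ) / n) :=
          (hinvpow _ (add_nonneg hLa0 hLb0) n hn).symm
      _ ≤ c n ^ ((1 : ℝ) / n) :=
          Real.rpow_le_rpow (pow_nonneg (add_nonneg hLa0 hLb0) n) (hclow n) (by positivity)
  · intro u hu
    set ε : ℝ := (u - (La + Lb)) / 3 with hεdef
    have hε0 : 0 < ε := by simp only [hεdef]; linarith
    have hαβu : La + ε + (Lb + ε) < u := by simp only [hεdef]; linarith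
    -- get a k with a k ≤ (La + ε)^k
    have hexa : ∃ k : ℕ, 1 ≤ k ∧ a k ≤ (La + ε) ^ k := by
      obtain ⟨k, h1, h2⟩ :=
        ((hLaT.eventually_lt_const (by linarith : La < La + ε)).and
          (eventually_ge_atTop 1)).exists
      refine ⟨k, h2, ?_⟩
      calc a k = (a k ^ ((1 : ℝ) / k)) ^ k := (hpowinv _ (hann' k) k h2).symm
        _ ≤ (La + ε) ^ k := pow_le_pow_left₀ (Real.rpow_nonneg (hann' k) _) h1.le k
    have hexb : ∃ k : ℕ, 1 ≤ k ∧ b k ≤ (Lb + ε) ^ k := by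
      obtain ⟨k, h1, h2⟩ :=
        ((hLbT.eventually_lt_const (by linarith : Lb < Lb + ε)).and
          (eventually_ge_atTop 1)).exists
      refine ⟨k, h2, ?_⟩
      calc b k = (b k ^ ((1 : ℝ) / k)) ^ k := (hpowinv _ (hbnn' k) k h2).symm
        _ ≤ (Lb + ε) ^ k := pow_le_pow_left₀ (Real.rpow_nonneg (hbnn' k) _) h1.le k
    obtain ⟨ka, hka1, hka⟩ := hexa
    obtain ⟨kb, hkb1, hkb⟩ := hexb
    have hα0 : (0 : ℝ) < La + ε := by linarith
    have hβ0 : (0 : ℝ) < Lb + ε := by linarith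
    obtain ⟨Ca, hCa1, hCab⟩ := bound_aux a ha0 hann' hasub' hα0 hka1 hka
    obtain ⟨Cb, hCb1, hCbb⟩ := bound_aux b hb0 hbnn' hbsub' hβ0 hkb1 hkb
    have hCC1 : 1 ≤ Ca * Cb := one_le_mul_of_one_le_of_one_le hCa1 hCb1
    have hCC0 : 0 ≤ Ca * Cb := le_trans zero_le_one hCC1
    have hcup : ∀ n, c n ≤ Ca * Cb * (La + ε + (Lb + ε)) ^ n := by
      intro n
      rw [hc n, add_pow, Finset.mul_sum]
      refine Finset.sum_le_sum ?_
      intro j _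
      have h1 : a j * b (n - j) ≤ Ca * (La + ε) ^ j * (Cb * (Lb + ε) ^ (n - j)) :=
        mul_le_mul (hCab j) (hCbb (n - j)) (hbnn' _)
          (mul_nonneg (le_trans zero_le_one hCa1) (pow_nonneg hα0.le _))
      calc (n.choose j : ℝ) * a j * b (n - j)
          = (n.choose j : ℝ) * (a j * b (n - j)) := by ring
        _ ≤ (n.choose j : ℝ) * (Ca * (La + ε) ^ j * (Cb * (Lb + ε) ^ (n - j))) :=
            mul_le_mul_of_nonneg_left h1 (Nat.cast_nonneg _)
        _ = Ca * Cb * ((La + ε) ^ j * (Lb + ε) ^ (n - j) * (n.choose j : ℝ)) := by ring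
    filter_upwards [ev_lt_aux hCC1 hαβu, eventually_ge_atTop 1] with n h1 hn
    have hx : c n ^ ((1 : ℝ) / n) ≤ (Ca * Cb) ^ ((1 : ℝ) / n) * (La + ε + (Lb + ε)) := by
      calc c n ^ ((1 : ℝ) / n)
          ≤ (Ca * Cb * (La + ε + (Lb + ε)) ^ n) ^ ((1 : ℝ) / n) :=
            Real.rpow_le_rpow (hcnn n) (hcup n) (by positivity)
        _ = (Ca * Cb) ^ ((1 : ℝ) / n) * ((La + ε + (Lb + ε)) ^ n) ^ ((1 : ℝ) / n) :=
            Real.mul_rpow hCC0 (pow_nonneg (by linarith) n)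
        _ = (Ca * Cb) ^ ((1 : ℝ) / n) * (La + ε + (Lb + ε)) := by
            rw [hinvpow _ (by linarith) n hn]
    exact lt_of_le_of_lt hx h1
end

section
/- Let $\mathcal{A}$ be a commutative real or complex normed algebra with multiplicative identity $e$ of norm $1$, and for $x \in \mathcal{A}$ let $R(x) = \inf_{n \ge 1} \|x^n\|^{1/n} = \lim_{n \to \infty} \|x^n\|^{1/n}$. Then $R$ is a seminorm on $\mathcal{A}$: $R(\alpha x) = |\alpha| R(x)$ for all scalars $\alpha$ and $R(x + y) \le R(x) + R(y)$ for all $x, y \in \mathcal{A}$; moreover $R(e) = 1$ and $R(x y) \le R(x) R(y)$ for all $x, y \in \mathcal{A}$. -/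
open Filter

private lemma rpow_lt_iff_aux {b L : ℝ} (hb : 0 ≤ b) (hL : 0 < L) {n : ℕ} (hn : n ≠ 0) :
    b ^ ((1 : ℝ) / (n : ℝ)) < L ↔ b < L ^ n := by
  have hn0 : (0:ℝ) < (n:ℝ) := by exact_mod_cast Nat.pos_of_ne_zero hn
  have key : ((L ^ n : ℝ)) ^ ((1:ℝ)/(n:ℝ)) = L := by
    rw [← Real.rpow_natCast L n, ← Real.rpow_mul hL.le, mul_one_div, div_self hn0.ne',
      Real.rpow_one]
  constructor
  · intro h
    have := Real.rpow_lt_rpow (Real.rpow_nonneg hb _) h (by positivity : (0:ℝ) < (n:ℝ))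
    rwa [← Real.rpow_mul hb, one_div_mul_cancel hn0.ne', Real.rpow_one,
      Real.rpow_natCast] at this
  · intro h
    calc b ^ ((1:ℝ)/(n:ℝ)) < ((L ^ n : ℝ)) ^ ((1:ℝ)/(n:ℝ)) :=
      Real.rpow_lt_rpow hb h (by positivity)
    _ = L := key

private lemma spread_aux {A : Type*} [NormedCommRing A] (x : A) (L : ℝ)
    {n : ℕ} (hn : n ≠ 0) (h : ‖x ^ n‖ ^ ((1 : ℝ) / (n : ℝ)) < L) :
    ∀ᶠ p : ℕ in atTop, ‖x ^ p‖ ^ ((1 : ℝ) / (p : ℝ)) < L := by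
  have hL : 0 < L := lt_of_le_of_lt (Real.rpow_nonneg (norm_nonneg _) _) h
  have hxn : ‖x ^ n‖ < L ^ n := (rpow_lt_iff_aux (norm_nonneg _) hL hn).1 h
  set δ : ℝ := L ^ n - ‖x ^ n‖ with hδ
  have hδpos : 0 < δ := by simp [hδ, hxn]
  set ε : ℝ := min 1 (δ / 2) with hε
  have hεpos : 0 < ε := lt_min one_pos (by positivity)
  have hεn : ‖x ^ n‖ + ε ^ n < L ^ n := by
    have h1 : ε ^ n ≤ ε := by
      calc ε ^ n ≤ ε ^ 1 :=
        pow_le_pow_of_le_one hεpos.le (min_le_left _ _) (Nat.one_le_iff_ne_zero.2 hn)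
      _ = ε := pow_one ε
    have h2 : ε ≤ δ / 2 := min_le_right _ _
    nlinarith
  set u : ℕ → ℝ := fun p => Real.log (‖x ^ p‖ + ε ^ p) with hu
  have hpos : ∀ p, 0 < ‖x ^ p‖ + ε ^ p := fun p => by positivity
  have hsub : Subadditive u := by
    intro m k
    have key : ‖x ^ (m + k)‖ + ε ^ (m + k) ≤ (‖x ^ m‖ + ε ^ m) * (‖x ^ k‖ + ε ^ k) := by
      have h1 : ‖x ^ (m + k)‖ ≤ ‖x ^ m‖ * ‖x ^ k‖ := by
        rw [pow_add]; exact norm_mul_le _ _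
      have h2 : (0:ℝ) ≤ ‖x ^ m‖ * ε ^ k := by positivity
      have h3 : (0:ℝ) ≤ ε ^ m * ‖x ^ k‖ := by positivity
      have h4 : ε ^ (m + k) = ε ^ m * ε ^ k := pow_add ε m k
      nlinarith
    calc u (m + k) ≤ Real.log ((‖x ^ m‖ + ε ^ m) * (‖x ^ k‖ + ε ^ k)) :=
      Real.log_le_log (hpos _) key
    _ = u m + u k := Real.log_mul (hpos m).ne' (hpos k).ne'
  have hbdd : BddBelow (Set.range fun p : ℕ => u p / p) := by
    refine ⟨min 0 (Real.log ε), ?_⟩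
    rintro _ ⟨p, rfl⟩
    rcases Nat.eq_zero_or_pos p with hp | hp
    · simp [hp, min_le_left]
    · refine le_trans (min_le_right _ _) ?_
      have hple : (p : ℝ) * Real.log ε ≤ u p := by
        rw [← Real.log_pow]
        exact Real.log_le_log (by positivity) (le_add_of_nonneg_left (norm_nonneg _))
      have hppos : (0:ℝ) < p := by exact_mod_cast hp
      rw [le_div_iff₀ hppos, mul_comm]
      exact hple
  have hlt : hsub.lim < Real.log L := by
    refine lt_of_le_of_lt (hsub.lim_le_div hbdd hn) ?_
    have hthis : u n < (n : ℝ) * Real.log L := by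
      rw [← Real.log_pow]
      exact Real.log_lt_log (hpos n) hεn
    have hnpos : (0:ℝ) < n := by exact_mod_cast Nat.pos_of_ne_zero hn
    rw [div_lt_iff₀ hnpos, mul_comm]
    exact hthis
  have hev : ∀ᶠ p in atTop, u p / p < Real.log L :=
    (hsub.tendsto_lim hbdd).eventually (gt_mem_nhds hlt)
  filter_upwards [hev, eventually_ge_atTop 1] with p hp hp1
  have hp0 : p ≠ 0 := Nat.one_le_iff_ne_zero.1 hp1
  have hppos : (0:ℝ) < p := by exact_mod_cast Nat.pos_of_ne_zero hp0
  have hup : u p < Real.log (L ^ p) := by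
    rw [Real.log_pow]
    rw [div_lt_iff₀ hppos] at hp
    linarith [hp]
  have hxp : ‖x ^ p‖ + ε ^ p < L ^ p :=
    (Real.log_lt_log_iff (hpos p) (by positivity)).1 hup
  refine (rpow_lt_iff_aux (norm_nonneg _) hL hp0).2 ?_
  exact lt_of_le_of_lt (le_add_of_nonneg_right (by positivity)) hxp

private lemma key_tendsto {A : Type*} [NormedCommRing A] (x : A) :
    Tendsto (fun p : ℕ => ‖x ^ p‖ ^ ((1 : ℝ) / p)) atTop
      (nhds (⨅ n : ℕ+, ‖x ^ (n : ℕ)‖ ^ ((1 : ℝ) / (n : ℕ)))) := by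
  have hbdd : BddBelow (Set.range fun n : ℕ+ => ‖x ^ (n:ℕ)‖ ^ ((1 : ℝ) / ((n:ℕ) : ℝ))) := by
    refine ⟨0, ?_⟩; rintro _ ⟨n, rfl⟩
    exact Real.rpow_nonneg (norm_nonneg _) _
  refine tendsto_order.2 ⟨fun l hl => ?_, fun L hL => ?_⟩
  · filter_upwards [eventually_ge_atTop 1] with p hp
    have h1 : (⨅ n : ℕ+, ‖x ^ (n:ℕ)‖ ^ ((1 : ℝ) / ((n:ℕ):ℝ))) ≤ ‖x ^ p‖ ^ ((1 : ℝ) / (p:ℝ)) :=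
      ciInf_le hbdd (⟨p, hp⟩ : ℕ+)
    exact lt_of_lt_of_le hl h1
  · obtain ⟨n, hn⟩ := exists_lt_of_ciInf_lt hL
    exact spread_aux x L n.pos.ne' hn

theorem spectral_radius_seminorm
    {𝕜 A : Type*} [RCLike 𝕜] [NormedCommRing A] [NormedAlgebra 𝕜 A] [NormOneClass A]
    (R : A → ℝ)
    (hR : ∀ x : A, R x = ⨅ n : ℕ+, ‖x ^ (n : ℕ)‖ ^ ((1 : ℝ) / (n : ℕ))) :
    (∀ x : A, Tendsto (fun n : ℕ => ‖x ^ n‖ ^ ((1 : ℝ) / n)) atTop (nhds (R x))) ∧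
    (∀ (α : 𝕜) (x : A), R (α • x) = ‖α‖ * R x) ∧
    (∀ x y : A, R (x + y) ≤ R x + R y) ∧
    R 1 = 1 ∧
    (∀ x y : A, R (x * y) ≤ R x * R y) := by
  have T : ∀ x : A, Tendsto (fun n : ℕ => ‖x ^ n‖ ^ ((1 : ℝ) / n)) atTop (nhds (R x)) := by
    intro x; rw [hR]; exact key_tendsto x
  have Rnonneg : ∀ x : A, 0 ≤ R x := fun x =>
    ge_of_tendsto (T x) (Eventually.of_forall fun n => Real.rpow_nonneg (norm_nonneg _) _)
  refine ⟨T, ?_, ?_, ?_, ?_⟩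
  · -- homogeneity
    intro α x
    refine tendsto_nhds_unique (T (α • x)) ?_
    have h2 : Tendsto (fun n : ℕ => ‖α‖ * ‖x ^ n‖ ^ ((1 : ℝ) / n)) atTop (nhds (‖α‖ * R x)) :=
      (T x).const_mul _
    refine h2.congr' ?_
    filter_upwards [eventually_ge_atTop 1] with n hn
    have hn' : (n : ℝ) ≠ 0 := by
      exact_mod_cast Nat.one_le_iff_ne_zero.1 hn
    rw [smul_pow, norm_smul, norm_pow α, Real.mul_rpow (by positivity) (norm_nonneg _),
      ← Real.rpow_natCast ‖α‖ n, ← Real.rpow_mul (norm_nonneg α), mul_one_div,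
      div_self hn', Real.rpow_one]
  · -- subadditivity
    intro x y
    have main : ∀ s t : ℝ, R x < s → R y < t → R (x + y) ≤ s + t := by
      intro s t hs ht
      have hs0 : 0 < s := lt_of_le_of_lt (Rnonneg x) hs
      have ht0 : 0 < t := lt_of_le_of_lt (Rnonneg y) ht
      have hC : ∀ (z : A) (r : ℝ), 0 < r → R z < r →
          ∃ C : ℝ, 1 ≤ C ∧ ∀ k, ‖z ^ k‖ ≤ C * r ^ k := by
        intro z r hr hzr
        obtain ⟨N, hN⟩ := eventually_atTop.1 ((T z).eventually (gt_mem_nhds hzr))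
        set f : ℕ → ℝ := fun k => ‖z ^ k‖ / r ^ k with hf
        refine ⟨max 1 ((Finset.range (N + 1)).sup' (by simp) f), le_max_left _ _, fun k => ?_⟩
        rcases le_or_gt k N with hk | hk
        · have h1 : f k ≤ (Finset.range (N + 1)).sup' (by simp) f :=
            Finset.le_sup' f (Finset.mem_range.2 (Nat.lt_succ_of_le hk))
          calc ‖z ^ k‖ = f k * r ^ k := by rw [hf]; field_simp
          _ ≤ _ := mul_le_mul_of_nonneg_right (h1.trans (le_max_right _ _)) (by positivity)
        · have hk0 : k ≠ 0 := by omega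
          have hzk : ‖z ^ k‖ < r ^ k :=
            (rpow_lt_iff_aux (norm_nonneg _) hr hk0).1 (hN k hk.le)
          calc ‖z ^ k‖ ≤ r ^ k := hzk.le
          _ = 1 * r ^ k := (one_mul _).symm
          _ ≤ _ := mul_le_mul_of_nonneg_right (le_max_left _ _) (by positivity)
      obtain ⟨C, hC1, hCx⟩ := hC x s hs0 hs
      obtain ⟨D, hD1, hDy⟩ := hC y t ht0 ht
      have key : ∀ n : ℕ, ‖(x + y) ^ n‖ ≤ C * D * (s + t) ^ n := by
        intro n
        rw [add_pow]
        calc ‖∑ k ∈ Finset.range (n + 1), x ^ k * y ^ (n - k) * (n.choose k : A)‖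
            ≤ ∑ k ∈ Finset.range (n + 1), ‖x ^ k * y ^ (n - k) * (n.choose k : A)‖ :=
          norm_sum_le _ _
        _ ≤ ∑ k ∈ Finset.range (n + 1), C * s ^ k * (D * t ^ (n - k)) * (n.choose k) := by
          refine Finset.sum_le_sum fun k _ => ?_
          have step1 : ‖x ^ k * y ^ (n - k) * (n.choose k : A)‖
              ≤ ‖x ^ k‖ * ‖y ^ (n - k)‖ * ‖(n.choose k : A)‖ :=
            (norm_mul_le _ _).trans
              (mul_le_mul_of_nonneg_right (norm_mul_le _ _) (norm_nonneg _))
          have hc : ‖(n.choose k : A)‖ ≤ (n.choose k : ℝ) := by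
            simpa using Nat.norm_cast_le (α := A) (n.choose k)
          refine step1.trans ?_
          exact mul_le_mul
            (mul_le_mul (hCx k) (hDy (n - k)) (norm_nonneg _) (by positivity))
            hc (norm_nonneg _) (by positivity)
        _ = C * D * (s + t) ^ n := by
          rw [add_pow, Finset.mul_sum]
          refine Finset.sum_congr rfl fun k _ => by ring
      have hCD0 : (0:ℝ) < C * D := by nlinarith
      have bound : ∀ n : ℕ, 1 ≤ n → ‖(x + y) ^ n‖ ^ ((1:ℝ)/n) ≤ (C * D) ^ ((1:ℝ)/n) * (s + t) := by
        intro n hn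
        have hn' : (n : ℝ) ≠ 0 := by exact_mod_cast Nat.one_le_iff_ne_zero.1 hn
        calc ‖(x + y) ^ n‖ ^ ((1:ℝ)/n) ≤ (C * D * (s + t) ^ n) ^ ((1:ℝ)/n) :=
          Real.rpow_le_rpow (norm_nonneg _) (key n) (by positivity)
        _ = (C * D) ^ ((1:ℝ)/n) * (s + t) := by
          rw [Real.mul_rpow (by positivity) (by positivity), ← Real.rpow_natCast (s + t) n,
            ← Real.rpow_mul (by positivity), mul_one_div, div_self hn', Real.rpow_one]
      have hlim : Tendsto (fun n : ℕ => (C * D) ^ ((1:ℝ)/n) * (s + t)) atTop (nhds (s + t)) := by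
        have h0 : Tendsto (fun n : ℕ => (1:ℝ)/n) atTop (nhds 0) :=
          tendsto_one_div_atTop_nhds_zero_nat
        have hcont : ContinuousAt (fun e : ℝ => (C * D) ^ e) 0 := by
          have heq : (fun e : ℝ => (C * D) ^ e) = fun e => Real.exp (Real.log (C * D) * e) :=
            funext fun e => Real.rpow_def_of_pos hCD0 e
          rw [heq]
          exact (Real.continuous_exp.comp (continuous_const.mul continuous_id)).continuousAt
        have := (hcont.tendsto.comp h0).mul_const (s + t)
        simpa [Real.rpow_zero] using this
      refine le_of_tendsto_of_tendsto (T (x + y)) hlim ?_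
      filter_upwards [eventually_ge_atTop 1] with n hn
      exact bound n hn
    refine le_of_forall_pos_le_add fun ε hε => ?_
    have := main (R x + ε / 2) (R y + ε / 2) (by linarith) (by linarith)
    linarith
  · -- R 1 = 1
    rw [hR]
    have h1 : ∀ n : ℕ+, ‖(1 : A) ^ (n : ℕ)‖ ^ ((1 : ℝ) / (n : ℕ)) = 1 := by
      intro n; rw [one_pow, norm_one, Real.one_rpow]
    simp only [h1]
    exact ciInf_const
  · -- submultiplicativity
    intro x y
    refine le_of_tendsto_of_tendsto' (T (x * y)) ((T x).mul (T y)) fun n => ?_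
    calc ‖(x * y) ^ n‖ ^ ((1:ℝ)/n) = ‖x ^ n * y ^ n‖ ^ ((1:ℝ)/n) := by rw [mul_pow]
    _ ≤ (‖x ^ n‖ * ‖y ^ n‖) ^ ((1:ℝ)/n) :=
      Real.rpow_le_rpow (norm_nonneg _) (norm_mul_le _ _) (by positivity)
    _ = ‖x ^ n‖ ^ ((1:ℝ)/n) * ‖y ^ n‖ ^ ((1:ℝ)/n) :=
      Real.mul_rpow (norm_nonneg _) (norm_nonneg _)
end
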